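/- Słupecki's Theorem. Let A be a finite set with |A| > 2, and let F be a set of operations on A that contains every unary operation on A. Then F is complete if and only if F contains an operation that is both surjective and essential, i.e. depends on at least two of its variables. -/

import Mathlib

universe u

/-- The type of finitary operations (of positive arity `n + 1`) on `A`. -/
abbrev Ops (A : Type u) : Type u := Σ n : ℕ, (Fin (n + 1) → A) → A

/-- A set of finitary operations on `A` is a clone if it contains all projection
operations and is closed under composition. -/
def IsClone {A : Type u} (C : Set (Ops A)) : Prop :=
  (∀ (n : ℕ) (i : Fin (n + 1)), (⟨n, fun x => x i⟩ : Ops A) ∈ C) ∧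
  ∀ (n m : ℕ) (f : (Fin (n + 1) → A) → A) (g : Fin (n + 1) → (Fin (m + 1) → A) → A),
    (⟨n, f⟩ : Ops A) ∈ C → (∀ i, (⟨m, g i⟩ : Ops A) ∈ C) →
    (⟨m, fun x => f fun i => g i x⟩ : Ops A) ∈ C

/-- The clone generated by a set `F` of operations: the least clone containing `F`. -/
def cloneGen {A : Type u} (F : Set (Ops A)) : Set (Ops A) :=
  ⋂₀ {C : Set (Ops A) | IsClone C ∧ F ⊆ C}

/-- The clone of all projection operations on `A`. -/
def projClone (A : Type u) : Set (Ops A) :=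
  {f : Ops A | ∃ i : Fin (f.1 + 1), f.2 = fun x => x i}

/-- A clone `M` is maximal if it is a proper subclone of the clone of all operations
and the clone of all operations is the only clone properly containing it. -/
def IsMaximalClone {A : Type u} (M : Set (Ops A)) : Prop :=
  IsClone M ∧ M ≠ Set.univ ∧
    ∀ D : Set (Ops A), IsClone D → M ⊆ D → D = M ∨ D = Set.univ

/-- A clone `C` is minimal if the clone of projections is its unique proper subclone. -/
def IsMinimalClone {A : Type u} (C : Set (Ops A)) : Prop :=
  IsClone C ∧ C ≠ projClone A ∧
    ∀ D : Set (Ops A), IsClone D → D ⊆ C → D = projClone A ∨ D = C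

/-- An `n`-ary operation `f` preserves a `k`-ary relation `ρ` if applying `f`
coordinatewise to tuples from `ρ` always yields a tuple in `ρ`. -/
def Preserves {A : Type u} {n k : ℕ} (f : (Fin n → A) → A) (ρ : Set (Fin k → A)) : Prop :=
  ∀ t : Fin n → Fin k → A, (∀ i, t i ∈ ρ) → (fun j => f fun i => t i j) ∈ ρ

/-- `Pol ρ` is the clone of all operations preserving the relation `ρ`. -/
def Pol {A : Type u} {k : ℕ} (ρ : Set (Fin k → A)) : Set (Ops A) :=
  {f : Ops A | Preserves f.2 ρ}

/-- An `n`-ary operation `f` depends on its `i`-th variable if there are two tuples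
differing only in the `i`-th coordinate on which `f` takes different values. -/
def DependsOnVar {A : Type u} {n : ℕ} (f : (Fin n → A) → A) (i : Fin n) : Prop :=
  ∃ x y : Fin n → A, (∀ j, j ≠ i → x j = y j) ∧ f x ≠ f y

namespace SluAux

variable {A : Type u}

/-- three pairwise distinct values -/
def Tri (a b c : A) : Prop := a ≠ b ∧ a ≠ c ∧ b ≠ c

def Tri3 (p q r s : A) : Prop := Tri p q r ∨ Tri p q s ∨ Tri p r s ∨ Tri q r s

lemma notTri {a b c : A} (h : ¬ Tri a b c) : a = b ∨ a = c ∨ b = c := by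
  unfold Tri at h; push_neg at h; by_cases h1 : a = b
  · exact Or.inl h1
  · by_cases h2 : a = c
    · exact Or.inr (Or.inl h2)
    · exact Or.inr (Or.inr (h h1 h2))

variable {X : Type v} {Y : Type w}

lemma tri2x2 (g : X → Y → A)
    (hx : ∃ x1 x2 y, g x1 y ≠ g x2 y) (hy : ∃ x y1 y2, g x y1 ≠ g x y2)
    (h3 : ∃ p1 p2 p3 : X × Y, Tri (g p1.1 p1.2) (g p2.1 p2.2) (g p3.1 p3.2)) :
    ∃ x1 x2 y1 y2, Tri3 (g x1 y1) (g x1 y2) (g x2 y1) (g x2 y2) := by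
  by_contra H
  push_neg at H
  have H2 : ∀ x1 x2 y1 y2, ¬ Tri (g x1 y1) (g x1 y2) (g x2 y2) :=
    fun a b c d t => H a b c d (Or.inr (Or.inl t))
  by_cases hrow : ∃ x ya yb yc, Tri (g x ya) (g x yb) (g x yc)
  · -- Case A : some row takes three distinct values; then g is independent of x
    obtain ⟨x0, y1, y2, y3, hab, hac, hbc⟩ := hrow
    have key : ∀ x' y, g x' y = g x0 y := by
      intro x' y
      have D1 := notTri (H2 x0 x' y1 y)
      have D2 := notTri (H2 x0 x' y2 y)
      have D3 := notTri (H2 x0 x' y3 y)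
      set a := g x0 y1; set b := g x0 y2; set c := g x0 y3
      set v := g x0 y; set w := g x' y
      by_cases hvw : v = w
      · exact hvw.symm
      · have h1 : a = v ∨ a = w := by rcases D1 with h|h|h; exacts [Or.inl h, Or.inr h, absurd h hvw]
        have h2 : b = v ∨ b = w := by rcases D2 with h|h|h; exacts [Or.inl h, Or.inr h, absurd h hvw]
        have h3 : c = v ∨ c = w := by rcases D3 with h|h|h; exacts [Or.inl h, Or.inr h, absurd h hvw]
        rcases h1 with h1|h1 <;> rcases h2 with h2|h2 <;> rcases h3 with h3|h3 <;>
          first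
            | exact absurd (h1.trans h2.symm) hab
            | exact absurd (h1.trans h3.symm) hac
            | exact absurd (h2.trans h3.symm) hbc
    obtain ⟨u1, u2, yy, hne⟩ := hx
    exact hne (by rw [key u1 yy, key u2 yy])
  · -- Case B : every row takes at most two values
    push_neg at hrow
    obtain ⟨x0, y1, y2, hab⟩ := hy
    obtain ⟨p1, p2, p3, t12, t13, t23⟩ := h3
    -- one of the three values differs from both g x0 y1 and g x0 y2
    have hone : ∃ z : X × Y, g z.1 z.2 ≠ g x0 y1 ∧ g z.1 z.2 ≠ g x0 y2 := by
      by_contra hn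
      push_neg at hn
      have m1 := hn p1; have m2 := hn p2; have m3 := hn p3
      rcases Classical.em (g p1.1 p1.2 = g x0 y1) with e1 | e1 <;>
      rcases Classical.em (g p2.1 p2.2 = g x0 y1) with e2 | e2 <;>
      rcases Classical.em (g p3.1 p3.2 = g x0 y1) with e3 | e3 <;>
        first
          | (exact t12 (by rw [e1, e2]))
          | (exact t13 (by rw [e1, e3]))
          | (exact t23 (by rw [e2, e3]))
          | (exact t12 (by rw [m1 e1, m2 e2]))
          | (exact t13 (by rw [m1 e1, m3 e3]))
          | (exact t23 (by rw [m2 e2, m3 e3]))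
    obtain ⟨⟨x', y'⟩, hca, hcb⟩ := hone
    rcases notTri (hrow x0 y1 y2 y') with h0 | h0 | h0
    · exact absurd h0 hab
    · -- g x0 y' = g x0 y1 : use submatrix (x0,x') × (y2, y')
      refine H2 x0 x' y2 y' ⟨?_, ?_, ?_⟩
      · rw [← h0]; exact fun e => hab e.symm
      · exact fun e => hcb e.symm
      · rw [← h0]; exact fun e => hca e.symm
    · -- g x0 y' = g x0 y2 : use submatrix (x0,x') × (y1, y')
      refine H2 x0 x' y1 y' ⟨?_, ?_, ?_⟩
      · rw [← h0]; exact hab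
      · exact fun e => hca e.symm
      · rw [← h0]; exact fun e => hcb e.symm


lemma and_cell (g : X → Y → A)
    (hx : ∃ x1 x2 y, g x1 y ≠ g x2 y) (hy : ∃ x y1 y2, g x y1 ≠ g x y2)
    (h3 : ∃ p1 p2 p3 : X × Y, Tri (g p1.1 p1.2) (g p2.1 p2.2) (g p3.1 p3.2)) :
    ∃ x1 x2 y1 y2 e, g x2 y2 = e ∧ g x1 y1 ≠ e ∧ g x1 y2 ≠ e ∧ g x2 y1 ≠ e := by
  obtain ⟨x1, x2, y1, y2, ht⟩ := tri2x2 g hx hy h3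
  rcases ht with ⟨hpq, hpr, hqr⟩ | ⟨hpq, hps, hqs⟩ | ⟨hpr, hps, hrs⟩ | ⟨hqr, hqs, hrs⟩
  · by_cases hps : g x1 y1 = g x2 y2
    · exact ⟨x2, x1, y1, y2, g x1 y2, rfl, fun e => hqr e.symm,
        fun e => hpq (hps.trans e), hpq⟩
    · exact ⟨x2, x1, y2, y1, g x1 y1, rfl, fun e => hps e.symm, fun e => hpr e.symm,
        fun e => hpq e.symm⟩
  · by_cases hpr : g x1 y1 = g x2 y1
    · exact ⟨x2, x1, y1, y2, g x1 y2, rfl, fun e => hpq (hpr.trans e),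
        fun e => hqs e.symm, hpq⟩
    · exact ⟨x2, x1, y2, y1, g x1 y1, rfl, fun e => hps e.symm, fun e => hpr e.symm,
        fun e => hpq e.symm⟩
  · by_cases hpq : g x1 y1 = g x1 y2
    · exact ⟨x1, x2, y2, y1, g x2 y1, rfl, fun e => hpr (hpq.trans e), hpr,
        fun e => hrs e.symm⟩
    · exact ⟨x2, x1, y2, y1, g x1 y1, rfl, fun e => hps e.symm, fun e => hpr e.symm,
        fun e => hpq e.symm⟩
  · by_cases hps : g x1 y1 = g x2 y2
    · exact ⟨x2, x1, y1, y2, g x1 y2, rfl, fun e => hqr e.symm,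
        fun e => hqs e.symm, fun e => hqs (e.symm.trans hps)⟩
    · exact ⟨x1, x2, y1, y2, g x2 y2, rfl, hps, hqs, hrs⟩

open Finset in
lemma three_le_card {T : Finset A} {a b c : A} (ha : a ∈ T) (hb : b ∈ T) (hc : c ∈ T)
    (h : Tri a b c) : 3 ≤ T.card := by
  classical
  obtain ⟨hab, hac, hbc⟩ := h
  have hsub : ({a, b, c} : Finset A) ⊆ T := by
    intro z hz
    simp only [Finset.mem_insert, Finset.mem_singleton] at hz
    rcases hz with rfl | rfl | rfl <;> assumption
  have : ({a, b, c} : Finset A).card = 3 := by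
    rw [Finset.card_insert_of_notMem (by simp [hab, hac]),
      Finset.card_insert_of_notMem (by simp [hbc]), Finset.card_singleton]
  calc 3 = ({a, b, c} : Finset A).card := this.symm
    _ ≤ T.card := Finset.card_le_card hsub

lemma exists_three_distinct {S : Finset A} (h : 3 ≤ S.card) :
    ∃ a b c, a ∈ S ∧ b ∈ S ∧ c ∈ S ∧ Tri a b c := by
  classical
  obtain ⟨a, ha⟩ := Finset.card_pos.mp (show 0 < S.card by omega)
  have h2 : 2 ≤ (S.erase a).card := by
    have := Finset.card_erase_of_mem ha; omega
  obtain ⟨b, hb⟩ := Finset.card_pos.mp (show 0 < (S.erase a).card by omega)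
  have h1 : 1 ≤ ((S.erase a).erase b).card := by
    have := Finset.card_erase_of_mem hb; omega
  obtain ⟨c, hc⟩ := Finset.card_pos.mp h1
  have hcb := (Finset.mem_erase.mp hc).1
  have hc' := (Finset.mem_erase.mp hc).2
  have hca := (Finset.mem_erase.mp hc').1
  have hba := (Finset.mem_erase.mp hb).1
  exact ⟨a, b, c, ha, (Finset.mem_erase.mp hb).2, (Finset.mem_erase.mp hc').2,
    fun e => hba e.symm, fun e => hca e.symm, fun e => hcb e.symm⟩

open Finset in
lemma pq_lemma [DecidableEq A] [DecidableEq X] [DecidableEq Y] (g : X → Y → A)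
    (hx : ∃ x1 x2 y, g x1 y ≠ g x2 y) (hy : ∃ x y1 y2, g x y1 ≠ g x y2) :
    ∀ (d : ℕ) (S : Finset A), (∀ v ∈ S, ∃ x y, g x y = v) → 3 + d ≤ S.card →
    ∃ (P : Finset X) (Q : Finset Y), P.card ≤ 2 + d ∧ Q.card ≤ 2 + d ∧
      3 + d ≤ ((P ×ˢ Q).image fun z => g z.1 z.2).card := by
  intro d
  induction d with
  | zero =>
    intro S hS hcard
    obtain ⟨v1, v2, v3, h1, h2, h3, htri⟩ := exists_three_distinct hcard
    obtain ⟨a1, b1, e1⟩ := hS v1 h1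
    obtain ⟨a2, b2, e2⟩ := hS v2 h2
    obtain ⟨a3, b3, e3⟩ := hS v3 h3
    have h3' : ∃ p1 p2 p3 : X × Y, Tri (g p1.1 p1.2) (g p2.1 p2.2) (g p3.1 p3.2) :=
      ⟨(a1, b1), (a2, b2), (a3, b3), by simpa [e1, e2, e3] using htri⟩
    obtain ⟨x1, x2, y1, y2, ht⟩ := tri2x2 g hx hy h3'
    refine ⟨{x1, x2}, {y1, y2}, ?_, ?_, ?_⟩
    · exact (card_insert_le _ _).trans (by simp)
    · exact (card_insert_le _ _).trans (by simp)
    · have hmem : ∀ (u : X) (v : Y), u ∈ ({x1, x2} : Finset X) → v ∈ ({y1, y2} : Finset Y) →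
        g u v ∈ (({x1, x2} ×ˢ {y1, y2} : Finset (X × Y)).image fun z => g z.1 z.2) :=
        fun u v hu hv => mem_image.mpr ⟨(u, v), mem_product.mpr ⟨hu, hv⟩, rfl⟩
      have m11 := hmem x1 y1 (by simp) (by simp)
      have m12 := hmem x1 y2 (by simp) (by simp)
      have m21 := hmem x2 y1 (by simp) (by simp)
      have m22 := hmem x2 y2 (by simp) (by simp)
      rcases ht with t | t | t | t
      exacts [three_le_card m11 m12 m21 t, three_le_card m11 m12 m22 t,
        three_le_card m11 m21 m22 t, three_le_card m12 m21 m22 t]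
  | succ d ih =>
    intro S hS hcard
    obtain ⟨P, Q, hP, hQ, hV⟩ := ih S hS (by omega)
    set V := ((P ×ˢ Q).image fun z => g z.1 z.2) with hVdef
    by_cases hbig : 3 + (d + 1) ≤ V.card
    · exact ⟨P, Q, by omega, by omega, hbig⟩
    · have hnotsub : ¬ S ⊆ V := fun hsub => by
        have := card_le_card hsub; omega
      obtain ⟨v, hvS, hvV⟩ := Finset.not_subset.mp hnotsub
      obtain ⟨xv, yv, hxy⟩ := hS v hvS
      refine ⟨insert xv P, insert yv Q, ?_, ?_, ?_⟩
      · exact (card_insert_le _ _).trans (by omega)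
      · exact (card_insert_le _ _).trans (by omega)
      · have hsub : insert v V ⊆ ((insert xv P ×ˢ insert yv Q).image fun z => g z.1 z.2) := by
          intro w hw
          rcases Finset.mem_insert.mp hw with rfl | hwV
          · exact mem_image.mpr ⟨(xv, yv), mem_product.mpr ⟨mem_insert_self _ _, mem_insert_self _ _⟩, hxy⟩
          · obtain ⟨z, hz, hze⟩ := mem_image.mp hwV
            exact mem_image.mpr ⟨z, product_subset_product (subset_insert _ _) (subset_insert _ _) hz, hze⟩
        have : (insert v V).card = V.card + 1 := card_insert_of_notMem hvV
        have := card_le_card hsub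
        omega




variable {A : Type u}

/-- essentiality -/
def Ess {n : ℕ} (f : (Fin (n + 1) → A) → A) : Prop :=
  ∃ i j : Fin (n + 1), i ≠ j ∧ DependsOnVar f i ∧ DependsOnVar f j

lemma not_depends_congr {n : ℕ} {f : (Fin (n + 1) → A) → A} {j : Fin (n + 1)}
    (h : ¬ DependsOnVar f j) {x y : Fin (n + 1) → A} (hxy : ∀ l, l ≠ j → x l = y l) :
    f x = f y := by
  by_contra hne; exact h ⟨x, y, hxy, hne⟩

lemma congr_of_indep {n : ℕ} (f : (Fin (n + 1) → A) → A) (i : Fin (n + 1))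
    (h : ∀ j, j ≠ i → ¬ DependsOnVar f j) :
    ∀ x y : Fin (n + 1) → A, x i = y i → f x = f y := by
  classical
  suffices H : ∀ (k : ℕ) (x y : Fin (n + 1) → A),
      (Finset.univ.filter fun j => x j ≠ y j).card ≤ k → x i = y i → f x = f y by
    intro x y hxy; exact H _ x y le_rfl hxy
  intro k
  induction k with
  | zero =>
    intro x y hc hxy
    have : x = y := by
      funext l
      by_contra hne
      have : l ∈ Finset.univ.filter fun j => x j ≠ y j := by simp [hne]
      have := Finset.card_pos.mpr ⟨l, this⟩
      omega
    rw [this]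
  | succ k ih =>
    intro x y hc hxy
    by_cases hxyeq : x = y
    · rw [hxyeq]
    · obtain ⟨j, hj⟩ := Function.ne_iff.mp hxyeq
      have hji : j ≠ i := fun e => hj (by rw [e]; exact hxy)
      have h1 : f x = f (Function.update x j (y j)) :=
        not_depends_congr (h j hji)
          (fun l hl => (Function.update_of_ne hl _ _).symm)
      rw [h1]
      apply ih
      · have hsub : (Finset.univ.filter fun l => Function.update x j (y j) l ≠ y l) ⊆
            (Finset.univ.filter fun l => x l ≠ y l).erase j := by
          intro l hl
          simp only [Finset.mem_filter, Finset.mem_univ, true_and] at hl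
          rcases eq_or_ne l j with rfl | hlj
          · rw [Function.update_self] at hl; exact absurd rfl hl
          · rw [Function.update_of_ne hlj] at hl
            exact Finset.mem_erase.mpr ⟨hlj, by simp [hl]⟩
        have hjmem : j ∈ (Finset.univ.filter fun l => x l ≠ y l) := by simp [hj]
        have := Finset.card_le_card hsub
        have := Finset.card_erase_of_mem hjmem
        omega
      · rw [Function.update_of_ne (Ne.symm hji)]; exact hxy

lemma exists_indep_of_not_ess {n : ℕ} {f : (Fin (n + 1) → A) → A} (h : ¬ Ess f) :
    ∃ i : Fin (n + 1), ∀ j, j ≠ i → ¬ DependsOnVar f j := by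
  by_cases hd : ∃ i, DependsOnVar f i
  · obtain ⟨i, hi⟩ := hd
    exact ⟨i, fun j hji hdj => h ⟨i, j, fun e => hji e.symm, hi, hdj⟩⟩
  · push_neg at hd
    exact ⟨0, fun j _ => hd j⟩

/-- the Słupecki clone -/
def Slu (A : Type u) : Set (Ops A) :=
  {F : Ops A | ¬ (Function.Surjective F.2 ∧ Ess F.2)}

lemma surj_of_unary_comp [Fintype A] {m : ℕ} (u : A → A) (w : (Fin (m + 1) → A) → A)
    (hs : Function.Surjective fun x => u (w x)) : Function.Surjective w := by
  classical
  have h1 : (Finset.univ.image w).image u = Finset.univ :=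
    Finset.eq_univ_of_forall fun a => by
      obtain ⟨x, hx⟩ := hs a
      exact Finset.mem_image.mpr ⟨w x, Finset.mem_image.mpr ⟨x, Finset.mem_univ x, rfl⟩, hx⟩
  have h2 : Fintype.card A ≤ (Finset.univ.image w).card := by
    calc Fintype.card A = ((Finset.univ.image w).image u).card := by
          rw [h1, Finset.card_univ]
      _ ≤ (Finset.univ.image w).card := Finset.card_image_le
  have h3 : Finset.univ.image w = Finset.univ :=
    Finset.eq_univ_of_card _ (le_antisymm (Finset.card_le_univ _) h2)
  intro a
  have : a ∈ Finset.univ.image w := by rw [h3]; exact Finset.mem_univ a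
  obtain ⟨x, _, hx⟩ := Finset.mem_image.mp this
  exact ⟨x, hx⟩

lemma isClone_slu [Fintype A] : IsClone (Slu A) := by
  constructor
  · intro n i hcon
    obtain ⟨hs, hess⟩ := hcon
    have hess' : Ess (fun x : Fin (n+1) → A => x i) := hess
    obtain ⟨l, j, hlj, hdl, hdj⟩ := hess'
    have hproj : ∀ (j' : Fin (n+1)), j' ≠ i → ¬ DependsOnVar (fun x : Fin (n+1) → A => x i) j' := by
      intro j' hj' hd
      obtain ⟨x, y, hxy, hne⟩ := hd
      exact hne (hxy i (fun e => hj' e.symm))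
    rcases eq_or_ne l i with rfl | hli
    · exact hproj j (fun e => hlj e.symm) hdj
    · exact hproj l hli hdl
  · intro n m f g hf hg hcomp
    obtain ⟨hsurj0, hess0⟩ := hcomp
    have hsurj : Function.Surjective (fun x : Fin (m+1) → A => f fun i => g i x) := hsurj0
    have hess : Ess (fun x : Fin (m+1) → A => f fun i => g i x) := hess0
    -- f must be surjective
    have hfsurj : Function.Surjective f := fun a => by
      obtain ⟨x, hx⟩ := hsurj a
      exact ⟨fun i => g i x, hx⟩
    have hfness : ¬ Ess f := fun he => hf ⟨hfsurj, he⟩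
    obtain ⟨i0, hi0⟩ := exists_indep_of_not_ess hfness
    set u : A → A := fun a => f (fun _ => a) with hu
    have hfu : ∀ x, f x = u (x i0) := fun x =>
      congr_of_indep f i0 hi0 x (fun _ => x i0) rfl
    have hcu : ∀ x, f (fun i => g i x) = u (g i0 x) := fun x => hfu _
    -- thus composite = u ∘ g i0
    have hgsurj : Function.Surjective (g i0) := by
      apply surj_of_unary_comp u (g i0)
      intro a
      obtain ⟨x, hx⟩ := hsurj a
      refine ⟨x, ?_⟩
      show u (g i0 x) = a
      rw [← hcu x]; exact hx
    have hgess : Ess (g i0) := by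
      obtain ⟨l, j, hlj, hdl, hdj⟩ := hess
      have dep : ∀ j', DependsOnVar (fun x => f fun i => g i x) j' → DependsOnVar (g i0) j' := by
        rintro j' ⟨x, y, hxy, hne⟩
        refine ⟨x, y, hxy, fun e => hne ?_⟩
        show f (fun i => g i x) = f (fun i => g i y)
        rw [hcu x, hcu y, e]
      exact ⟨l, j, hlj, dep l hdl, dep j hdj⟩
    exact hg i0 ⟨hgsurj, hgess⟩

lemma isClone_cloneGen (F : Set (Ops A)) : IsClone (cloneGen F) := by
  constructor
  · intro n i
    exact Set.mem_sInter.mpr fun C hC => hC.1.1 n i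
  · intro n m f g hf hg
    exact Set.mem_sInter.mpr fun C hC =>
      hC.1.2 n m f g (Set.mem_sInter.mp hf C hC) (fun i => Set.mem_sInter.mp (hg i) C hC)

lemma subset_cloneGen (F : Set (Ops A)) : F ⊆ cloneGen F :=
  fun f hf => Set.mem_sInter.mpr fun _ hC => hC.2 hf

lemma cloneGen_subset {F C : Set (Ops A)} (hC : IsClone C) (hFC : F ⊆ C) :
    cloneGen F ⊆ C := fun f hf => Set.mem_sInter.mp hf C ⟨hC, hFC⟩

section MemHelpers

variable {D : Set (Ops A)} (hD : IsClone D)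
  (hu : ∀ u : A → A, (⟨0, fun x : Fin 1 → A => u (x 0)⟩ : Ops A) ∈ D)

include hD hu

lemma mem_unary_proj (u : A → A) (m : ℕ) (i : Fin (m + 1)) :
    (⟨m, fun x => u (x i)⟩ : Ops A) ∈ D :=
  hD.2 0 m (fun x => u (x 0)) (fun _ => fun x => x i) (hu u) (fun _ => hD.1 m i)

lemma mem_post {m : ℕ} {h : (Fin (m + 1) → A) → A} (hm : (⟨m, h⟩ : Ops A) ∈ D)
    (φ : A → A) : (⟨m, fun x => φ (h x)⟩ : Ops A) ∈ D :=
  hD.2 0 m (fun x => φ (x 0)) (fun _ => h) (hu φ) (fun _ => hm)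

lemma mem_const (m : ℕ) (a : A) : (⟨m, fun _ => a⟩ : Ops A) ∈ D :=
  mem_unary_proj hD hu (fun _ => a) m 0

end MemHelpers

/-- some surjective essential operation (needs only `2 ≤ |A|`). -/
lemma exists_good [Fintype A] (hA : 1 < Fintype.card A) :
    ∃ (f : (Fin 2 → A) → A), Function.Surjective f ∧ Ess f := by
  classical
  obtain ⟨a, b, hab⟩ := Fintype.exists_pair_of_one_lt_card hA
  have hba : ¬ b = a := fun e => hab e.symm
  refine ⟨fun x => if x 1 = a then Equiv.swap a b (x 0) else x 0, ?_, ?_⟩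
  · intro c
    refine ⟨![c, b], ?_⟩
    simp [hba]
  · refine ⟨0, 1, by decide, ⟨![a, b], ![b, b], ?_, ?_⟩, ⟨![a, a], ![a, b], ?_, ?_⟩⟩
    · intro j hj; fin_cases j <;> simp_all
    · simpa [hba] using hab
    · intro j hj; fin_cases j <;> simp_all
    · simpa [hba, Equiv.swap_apply_left] using Ne.symm hab

theorem key [Fintype A] (hA : 2 < Fintype.card A)
    (D : Set (Ops A)) (hD : IsClone D)
    (hu : ∀ u : A → A, (⟨0, fun x : Fin 1 → A => u (x 0)⟩ : Ops A) ∈ D)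
    {N : ℕ} {fs : (Fin (N + 1) → A) → A} (hfsD : (⟨N, fs⟩ : Ops A) ∈ D)
    (hsurj : Function.Surjective fs) {i j : Fin (N + 1)} (hij : i ≠ j)
    (hdi : DependsOnVar fs i) (hdj : DependsOnVar fs j) :
    ∀ (p : ℕ) (h : (Fin (p + 1) → A) → A), (⟨p, h⟩ : Ops A) ∈ D := by
  classical
  obtain ⟨zer, one, hzo⟩ := Fintype.exists_pair_of_one_lt_card (show 1 < Fintype.card A by omega)
  set g : A → (Fin (N + 1) → A) → A := fun s t => fs (Function.update t i s) with hgdef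
  have hgval : ∀ s t, g s t = fs (Function.update t i s) := fun _ _ => rfl
  have hgx : ∃ x1 x2 y, g x1 y ≠ g x2 y := by
    obtain ⟨x, y, hxy, hne⟩ := hdi
    have e1 : g (x i) x = fs x := by rw [hgval, Function.update_eq_self]
    have e2 : g (y i) x = fs y := by
      rw [hgval]
      congr 1
      funext l
      rcases eq_or_ne l i with rfl | hl
      · simp
      · rw [Function.update_of_ne hl]; exact hxy l hl
    exact ⟨x i, y i, x, by rw [e1, e2]; exact hne⟩
  have hgy : ∃ x y1 y2, g x y1 ≠ g x y2 := by
    obtain ⟨x, y, hxy, hne⟩ := hdj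
    have e1 : g (x i) x = fs x := by rw [hgval, Function.update_eq_self]
    have e2 : g (x i) y = fs y := by
      rw [hgval, hxy i hij, Function.update_eq_self]
    exact ⟨x i, x, y, by rw [e1, e2]; exact hne⟩
  have hgsurj : ∀ v, ∃ s t, g s t = v := by
    intro v; obtain ⟨z, hz⟩ := hsurj v
    exact ⟨z i, z, by rw [hgval, Function.update_eq_self]; exact hz⟩
  -- three pairwise distinct attained values
  have h3 : ∃ p1 p2 p3 : A × (Fin (N + 1) → A),
      Tri (g p1.1 p1.2) (g p2.1 p2.2) (g p3.1 p3.2) := by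
    obtain ⟨v1, v2, v3, _, _, _, htri⟩ :=
      exists_three_distinct (S := (Finset.univ : Finset A)) (by rw [Finset.card_univ]; omega)
    obtain ⟨a1, b1, e1⟩ := hgsurj v1
    obtain ⟨a2, b2, e2⟩ := hgsurj v2
    obtain ⟨a3, b3, e3⟩ := hgsurj v3
    exact ⟨(a1, b1), (a2, b2), (a3, b3), by simpa [e1, e2, e3] using htri⟩
  obtain ⟨s1, s2, t1, t2, e, he, h11, h12, h21⟩ := and_cell g hgx hgy h3
  set σ : A → A := fun u => if u = one then s2 else s1 with hσ
  set τ : Fin (N + 1) → A → A := fun l v => if v = one then t2 l else t1 l with hτ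
  set ψ : A → A := fun w => if w = e then one else zer with hψ
  set andfn : (Fin 2 → A) → A :=
    fun y => ψ (fs (fun l => if l = i then σ (y 0) else τ l (y 1))) with handfn
  have handD : (⟨1, andfn⟩ : Ops A) ∈ D := by
    have hargs : ∀ l : Fin (N + 1),
        (⟨1, fun x : Fin 2 → A => if l = i then σ (x 0) else τ l (x 1)⟩ : Ops A) ∈ D := by
      intro l
      by_cases hl : l = i
      · have heq : (fun x : Fin 2 → A => if l = i then σ (x 0) else τ l (x 1)) =
            fun x => σ (x 0) := funext fun x => if_pos hl
        rw [heq]; exact mem_unary_proj hD hu σ 1 0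
      · have heq : (fun x : Fin 2 → A => if l = i then σ (x 0) else τ l (x 1)) =
            fun x => τ l (x 1) := funext fun x => if_neg hl
        rw [heq]; exact mem_unary_proj hD hu (τ l) 1 1
    have := mem_post hD hu
      (hD.2 N 1 fs (fun l => fun x : Fin 2 → A => if l = i then σ (x 0) else τ l (x 1))
        hfsD hargs) ψ
    exact this
  -- evaluation of andfn
  have hand_eval : ∀ u v : A, ψ (fs (fun l => if l = i then σ u else τ l v)) =
      if u = one ∧ v = one then one else zer := by
    intro u v
    have htup : fs (fun l => if l = i then σ u else τ l v) = g (σ u) (fun l => τ l v) := by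
      rw [hgval]
      congr 1
      funext l
      rw [Function.update_apply]
    rw [htup]
    by_cases hu1 : u = one <;> by_cases hv1 : v = one
    · have e1 : σ u = s2 := by simp only [hσ]; rw [if_pos hu1]
      have e2 : (fun l => τ l v) = t2 := funext fun l => by simp only [hτ]; rw [if_pos hv1]
      rw [e1, e2, he]
      simp only [hψ]
      simp [hu1, hv1]
    · have e1 : σ u = s2 := by simp only [hσ]; rw [if_pos hu1]
      have e2 : (fun l => τ l v) = t1 := funext fun l => by simp only [hτ]; rw [if_neg hv1]
      rw [e1, e2]
      simp only [hψ]
      rw [if_neg h21, if_neg (fun hc => hv1 hc.2)]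
    · have e1 : σ u = s1 := by simp only [hσ]; rw [if_neg hu1]
      have e2 : (fun l => τ l v) = t2 := funext fun l => by simp only [hτ]; rw [if_pos hv1]
      rw [e1, e2]
      simp only [hψ]
      rw [if_neg h12, if_neg (fun hc => hu1 hc.1)]
    · have e1 : σ u = s1 := by simp only [hσ]; rw [if_neg hu1]
      have e2 : (fun l => τ l v) = t1 := funext fun l => by simp only [hτ]; rw [if_neg hv1]
      rw [e1, e2]
      simp only [hψ]
      rw [if_neg h11, if_neg (fun hc => hu1 hc.1)]
  have hand2 : ∀ u v : A, andfn (fun idx : Fin 2 => if idx = 0 then u else v) =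
      if u = one ∧ v = one then one else zer := by
    intro u v
    have h0 : (if (0 : Fin 2) = 0 then u else v) = u := if_pos rfl
    have h1 : (if (1 : Fin 2) = 0 then u else v) = v := if_neg (by decide)
    calc andfn (fun idx : Fin 2 => if idx = 0 then u else v)
        = ψ (fs (fun l => if l = i then σ (if (0 : Fin 2) = 0 then u else v)
            else τ l (if (1 : Fin 2) = 0 then u else v))) := rfl
      _ = ψ (fs (fun l => if l = i then σ u else τ l v)) := by rw [h0, h1]
      _ = _ := hand_eval u v
  set ν : A → A := fun w => if w = one then zer else one with hν
  have hν_eval : ∀ w, (ν w = one) = (w ≠ one) := by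
    intro w
    by_cases hw : w = one
    · simp only [hν]; rw [if_pos hw]
      simp [hw, fun e => hzo e]
    · simp only [hν]; rw [if_neg hw]
      simp [hw]
  set orfn : (Fin 2 → A) → A := fun y => ν (andfn (fun idx => ν (y idx))) with horfn
  have horD : (⟨1, orfn⟩ : Ops A) ∈ D := by
    have := mem_post hD hu
      (hD.2 1 1 andfn (fun idx => fun x : Fin 2 → A => ν (x idx)) handD
        (fun idx => mem_unary_proj hD hu ν 1 idx)) ν
    exact this
  have hor2 : ∀ u v : A, orfn (fun idx : Fin 2 => if idx = 0 then u else v) =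
      if u = one ∨ v = one then one else zer := by
    intro u v
    have harg : (fun idx : Fin 2 => ν ((fun idx : Fin 2 => if idx = 0 then u else v) idx)) =
        fun idx : Fin 2 => if idx = 0 then ν u else ν v := by
      funext idx
      by_cases hidx : idx = 0 <;> simp [hidx]
    calc orfn (fun idx : Fin 2 => if idx = 0 then u else v)
        = ν (andfn (fun idx : Fin 2 => if idx = 0 then ν u else ν v)) := by
          rw [horfn]; dsimp only; rw [harg]
      _ = ν (if ν u = one ∧ ν v = one then one else zer) := by rw [hand2]
      _ = if u = one ∨ v = one then one else zer := by
          have hν1 : ν one = zer := if_pos rfl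
          have hν0 : ∀ w, w ≠ one → ν w = one := fun w hw => if_neg hw
          by_cases hu1 : u = one <;> by_cases hv1 : v = one
          · rw [hu1, hν1, if_neg (fun hc => hzo hc.1), hν0 zer hzo, if_pos (Or.inl rfl)]
          · rw [hu1, hν1, if_neg (fun hc => hzo hc.1), hν0 zer hzo, if_pos (Or.inl rfl)]
          · rw [hv1, hν1, if_neg (fun hc => hzo hc.2), hν0 zer hzo, if_pos (Or.inr rfl)]
          · rw [hν0 u hu1, hν0 v hv1, if_pos ⟨rfl, rfl⟩, hν1,
              if_neg (fun hc => hc.elim hu1 hv1)]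
  -- combination of two operations through a binary one
  have hcomb2 : ∀ (m : ℕ) (b : (Fin 2 → A) → A), (⟨1, b⟩ : Ops A) ∈ D →
      ∀ (pf qf : (Fin (m + 1) → A) → A), (⟨m, pf⟩ : Ops A) ∈ D → (⟨m, qf⟩ : Ops A) ∈ D →
      (⟨m, fun x => b (fun idx : Fin 2 => if idx = 0 then pf x else qf x)⟩ : Ops A) ∈ D := by
    intro m b hb pf qf hp hq
    have := hD.2 1 m b (fun idx => if idx = 0 then pf else qf) hb (fun idx => by
      by_cases hidx : idx = 0
      · rw [if_pos hidx]; exact hp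
      · rw [if_neg hidx]; exact hq)
    have heq : (fun x : Fin (m + 1) → A => b fun idx => (if idx = 0 then pf else qf) x) =
        fun x => b (fun idx : Fin 2 => if idx = 0 then pf x else qf x) := by
      funext x; congr 1; funext idx
      by_cases hidx : idx = 0
      · rw [if_pos hidx, if_pos hidx]
      · rw [if_neg hidx, if_neg hidx]
    rw [heq] at this
    exact this
  -- minterms
  have minterm_mem : ∀ (m : ℕ) (a : Fin (m + 1) → A),
      (⟨m, fun x => if x = a then one else zer⟩ : Ops A) ∈ D := by
    intro m a
    have part : ∀ l : ℕ, l ≤ m + 1 →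
        (⟨m, fun x => if (∀ l' : Fin (m + 1), (l' : ℕ) < l → x l' = a l') then one else zer⟩ :
          Ops A) ∈ D := by
      intro l
      induction l with
      | zero =>
        intro _
        have heq : (fun x : Fin (m + 1) → A =>
            if (∀ l' : Fin (m + 1), (l' : ℕ) < 0 → x l' = a l') then one else zer) =
            fun _ => one :=
          funext fun x => if_pos (fun l' hl' => absurd hl' (Nat.not_lt_zero _))
        rw [heq]; exact mem_const hD hu m one
      | succ l ih =>
        intro hl
        have hl' : l < m + 1 := hl
        have hP := ih (Nat.le_of_lt hl')
        have hind := mem_unary_proj hD hu (fun v => if v = a ⟨l, hl'⟩ then one else zer) m ⟨l, hl'⟩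
        have hcombo := hcomb2 m andfn handD _ _ hP hind
        have heq : (fun x : Fin (m + 1) → A => andfn (fun idx : Fin 2 => if idx = 0
            then (if (∀ l' : Fin (m + 1), (l' : ℕ) < l → x l' = a l') then one else zer)
            else (if x ⟨l, hl'⟩ = a ⟨l, hl'⟩ then one else zer))) =
            fun x => if (∀ l' : Fin (m + 1), (l' : ℕ) < l + 1 → x l' = a l') then one else zer := by
          funext x
          rw [hand2]
          by_cases hc1 : (∀ l' : Fin (m + 1), (l' : ℕ) < l → x l' = a l') <;>
            by_cases hc2 : x ⟨l, hl'⟩ = a ⟨l, hl'⟩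
          · rw [if_pos hc1, if_pos hc2, if_pos ⟨rfl, rfl⟩, if_pos]
            intro l' hl''
            rcases Nat.lt_or_ge (l' : ℕ) l with hlt | hge
            · exact hc1 l' hlt
            · have : (l' : ℕ) = l := by omega
              have : l' = ⟨l, hl'⟩ := Fin.ext this
              rw [this]; exact hc2
          · rw [if_pos hc1, if_neg hc2, if_neg (fun hc => hzo hc.2), if_neg]
            intro hc
            exact hc2 (hc ⟨l, hl'⟩ (Nat.lt_succ_self l))
          · rw [if_neg hc1, if_pos hc2, if_neg (fun hc => hzo hc.1), if_neg]
            intro hc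
            exact hc1 (fun l' hl'' => hc l' (by omega))
          · rw [if_neg hc1, if_neg hc2, if_neg (fun hc => hzo hc.1), if_neg]
            intro hc
            exact hc1 (fun l' hl'' => hc l' (by omega))
        rw [heq] at hcombo
        exact hcombo
    have hfin := part (m + 1) le_rfl
    have heq : (fun x : Fin (m + 1) → A =>
        if (∀ l' : Fin (m + 1), (l' : ℕ) < m + 1 → x l' = a l') then one else zer) =
        fun x => if x = a then one else zer := by
      funext x
      refine if_congr ⟨fun hp => funext fun l' => hp l' l'.isLt, fun hp l' _ => by rw [hp]⟩ rfl rfl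
    rw [heq] at hfin
    exact hfin
  -- indicators of finite sets of tuples
  have indS_mem : ∀ (m : ℕ) (S : Finset (Fin (m + 1) → A)),
      (⟨m, fun x => if x ∈ S then one else zer⟩ : Ops A) ∈ D := by
    intro m S
    induction S using Finset.induction_on with
    | empty =>
      have heq : (fun x : Fin (m + 1) → A => if x ∈ (∅ : Finset (Fin (m + 1) → A)) then one
          else zer) = fun _ => zer := funext fun x => if_neg (Finset.notMem_empty x)
      rw [heq]; exact mem_const hD hu m zer
    | @insert a S ha ih =>
      have hcombo := hcomb2 m orfn horD _ _ (minterm_mem m a) ih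
      have heq : (fun x : Fin (m + 1) → A => orfn (fun idx : Fin 2 => if idx = 0
          then (if x = a then one else zer) else (if x ∈ S then one else zer))) =
          fun x => if x ∈ insert a S then one else zer := by
        funext x
        rw [hor2]
        by_cases hc1 : x = a <;> by_cases hc2 : x ∈ S
        · rw [if_pos hc1, if_pos hc2, if_pos (Or.inl rfl),
            if_pos (Finset.mem_insert.mpr (Or.inl hc1))]
        · rw [if_pos hc1, if_neg hc2, if_pos (Or.inl rfl),
            if_pos (Finset.mem_insert.mpr (Or.inl hc1))]
        · rw [if_neg hc1, if_pos hc2, if_pos (Or.inr rfl),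
            if_pos (Finset.mem_insert.mpr (Or.inr hc2))]
        · rw [if_neg hc1, if_neg hc2, if_neg, if_neg]
          · intro hc
            rcases Finset.mem_insert.mp hc with h' | h'
            · exact hc1 h'
            · exact hc2 h'
          · intro hc
            rcases hc with h' | h'
            · exact hzo h'
            · exact hzo h'
      rw [heq] at hcombo
      exact hcombo
  -- all {zer, one}-valued operations
  have bool_mem : ∀ (m : ℕ) (pfun : (Fin (m + 1) → A) → A),
      (∀ x, pfun x = zer ∨ pfun x = one) → (⟨m, pfun⟩ : Ops A) ∈ D := by
    intro m pfun hp
    have heq : (fun x => if x ∈ Finset.univ.filter (fun a : Fin (m + 1) → A => pfun a = one)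
        then one else zer) = pfun := by
      funext x
      rcases hp x with h1 | h1
      · rw [if_neg, h1]
        intro hmem
        exact hzo (h1.symm.trans (Finset.mem_filter.mp hmem).2)
      · rw [if_pos (Finset.mem_filter.mpr ⟨Finset.mem_univ x, h1⟩), h1]
    rw [← heq]
    exact indS_mem m _
  -- all operations with at most two values
  have image2_mem : ∀ (m : ℕ) (h : (Fin (m + 1) → A) → A) (w1 w2 : A),
      (∀ x, h x = w1 ∨ h x = w2) → (⟨m, h⟩ : Ops A) ∈ D := by
    intro m h w1 w2 hw
    have hχ : (⟨m, fun x => if h x = w1 then one else zer⟩ : Ops A) ∈ D :=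
      bool_mem m _ (fun x => by
        by_cases hx : h x = w1
        · rw [if_pos hx]; exact Or.inr rfl
        · rw [if_neg hx]; exact Or.inl rfl)
    have hpost := mem_post hD hu hχ (fun v => if v = one then w1 else w2)
    have heq : (fun x => if (if h x = w1 then one else zer) = one then w1 else w2) = h := by
      funext x
      by_cases hx : h x = w1
      · rw [if_pos hx, if_pos rfl, hx]
      · rw [if_neg hx, if_neg (fun hc => hzo hc)]
        rcases hw x with h1 | h1
        · exact absurd h1 hx
        · rw [h1]
    rw [← heq]
    exact hpost
  -- base of the induction : image of size ≤ 2
  have base : ∀ (p' : ℕ) (h : (Fin (p' + 1) → A) → A),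
      (Finset.image h Finset.univ).card ≤ 2 → (⟨p', h⟩ : Ops A) ∈ D := by
    intro p' h hcard
    by_cases hT : ∃ x, h x ≠ h (fun _ => zer)
    · obtain ⟨x0, hx0⟩ := hT
      apply image2_mem p' h (h (fun _ => zer)) (h x0)
      intro x
      by_contra hcon
      push_neg at hcon
      obtain ⟨hc1, hc2⟩ := hcon
      have h3le := three_le_card (T := Finset.image h Finset.univ)
        (Finset.mem_image.mpr ⟨fun _ => zer, Finset.mem_univ _, rfl⟩)
        (Finset.mem_image.mpr ⟨x0, Finset.mem_univ _, rfl⟩)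
        (Finset.mem_image.mpr ⟨x, Finset.mem_univ _, rfl⟩)
        ⟨Ne.symm hx0, Ne.symm hc1, Ne.symm hc2⟩
      omega
    · push_neg at hT
      exact image2_mem p' h (h fun _ => zer) (h fun _ => zer) (fun x => Or.inl (hT x))
  -- main induction on the size of the image
  have main : ∀ (d : ℕ) (p' : ℕ) (h : (Fin (p' + 1) → A) → A),
      (Finset.image h Finset.univ).card ≤ 2 + d → (⟨p', h⟩ : Ops A) ∈ D := by
    intro d
    induction d with
    | zero => exact base
    | succ d ih =>
      intro p' h hcard
      by_cases hsmall : (Finset.image h Finset.univ).card ≤ 2 + d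
      · exact ih p' h hsmall
      · have hk : 3 + d ≤ Fintype.card A := by
          have h1 := Finset.card_le_univ (Finset.image h Finset.univ)
          omega
        obtain ⟨P, Q, hP, hQ, hV⟩ := pq_lemma g hgx hgy d Finset.univ
          (fun v _ => hgsurj v) (by rw [Finset.card_univ]; omega)
        set V := ((P ×ˢ Q).image fun z => g z.1 z.2) with hVdef
        set W := Finset.image h Finset.univ with hWdef
        have hWV : W.card ≤ V.card := by omega
        -- build an injection θ of W into V
        set θ : A → A := fun w => if hw : w ∈ W
          then (V.equivFin.symm (Fin.castLE hWV (W.equivFin ⟨w, hw⟩)) : A) else w with hθ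
        have hθV : ∀ w ∈ W, θ w ∈ V := by
          intro w hw
          simp only [hθ]
          rw [dif_pos hw]
          exact (V.equivFin.symm _).2
        have hθinj : ∀ w1 ∈ W, ∀ w2 ∈ W, θ w1 = θ w2 → w1 = w2 := by
          intro w1 hw1 w2 hw2 hee
          simp only [hθ] at hee
          rw [dif_pos hw1, dif_pos hw2] at hee
          have h1 := Subtype.coe_injective hee
          have h2 := V.equivFin.symm.injective h1
          have h3 := Fin.castLE_injective hWV h2
          have h4 := W.equivFin.injective h3
          exact congrArg Subtype.val h4
        -- choose preimages in P × Q
        have hsel : ∀ w : A, ∃ z : A × (Fin (N + 1) → A),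
            w ∈ W → (z.1 ∈ P ∧ z.2 ∈ Q ∧ g z.1 z.2 = θ w) := by
          intro w
          by_cases hw : w ∈ W
          · have hmem : θ w ∈ V := hθV w hw
            rw [hVdef] at hmem
            obtain ⟨z, hz, hze⟩ := Finset.mem_image.mp hmem
            exact ⟨z, fun _ => ⟨(Finset.mem_product.mp hz).1, (Finset.mem_product.mp hz).2, hze⟩⟩
          · exact ⟨⟨zer, fun _ => zer⟩, fun hc => absurd hc hw⟩
        choose sel hsel2 using hsel
        have hxW : ∀ x, h x ∈ W := fun x => Finset.mem_image.mpr ⟨x, Finset.mem_univ x, rfl⟩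
        have hmem1 : (⟨p', fun x => (sel (h x)).1⟩ : Ops A) ∈ D := by
          apply ih
          have hsub : Finset.image (fun x => (sel (h x)).1) Finset.univ ⊆ P := by
            intro v hv
            obtain ⟨x, _, rfl⟩ := Finset.mem_image.mp hv
            exact (hsel2 (h x) (hxW x)).1
          exact le_trans (Finset.card_le_card hsub) (by omega)
        have hmem2 : ∀ l : Fin (N + 1), (⟨p', fun x => (sel (h x)).2 l⟩ : Ops A) ∈ D := by
          intro l
          apply ih
          have hsub : Finset.image (fun x => (sel (h x)).2 l) Finset.univ ⊆
              Q.image (fun t => t l) := by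
            intro v hv
            obtain ⟨x, _, rfl⟩ := Finset.mem_image.mp hv
            exact Finset.mem_image.mpr ⟨(sel (h x)).2, (hsel2 (h x) (hxW x)).2.1, rfl⟩
          refine le_trans (Finset.card_le_card hsub) (le_trans Finset.card_image_le (by omega))
        have hcompo := hD.2 N p' fs
          (fun l => if l = i then (fun x => (sel (h x)).1) else (fun x => (sel (h x)).2 l))
          hfsD (fun l => by
            by_cases hl : l = i
            · rw [if_pos hl]; exact hmem1
            · rw [if_neg hl]; exact hmem2 l)
        set θinv : A → A := fun v => if hv : ∃ w, w ∈ W ∧ θ w = v then hv.choose else v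
          with hθinv
        have hinv : ∀ w ∈ W, θinv (θ w) = w := by
          intro w hw
          have hex : ∃ w', w' ∈ W ∧ θ w' = θ w := ⟨w, hw, rfl⟩
          simp only [hθinv]
          rw [dif_pos hex]
          exact hθinj _ hex.choose_spec.1 _ hw hex.choose_spec.2
        have hfinal := mem_post hD hu hcompo θinv
        have heq : (fun x => θinv (fs fun l =>
            (if l = i then (fun x => (sel (h x)).1) else fun x => (sel (h x)).2 l) x)) = h := by
          funext x
          obtain ⟨hp1, hq1, hgv⟩ := hsel2 (h x) (hxW x)
          have harg : (fun l => (if l = i then (fun x => (sel (h x)).1)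
              else fun x => (sel (h x)).2 l) x) =
              Function.update (sel (h x)).2 i (sel (h x)).1 := by
            funext l
            by_cases hl : l = i
            · rw [if_pos hl]
              subst hl
              rw [Function.update_self]
            · rw [if_neg hl, Function.update_of_ne hl]
          rw [harg, ← hgval, hgv, hinv (h x) (hxW x)]
        rw [← heq]
        exact hfinal
  intro p h
  apply main (Fintype.card A - 2) p h
  have h1 := Finset.card_le_univ (Finset.image h Finset.univ)
  omega

end SluAux

/-- **Słupecki's Theorem.**  Let `A` be a finite set with `|A| > 2` and let `F` be a set
of operations on `A` containing every unary operation.  Then `F` is complete if and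
only if `F` contains an operation that is both surjective and essential (depends on at
least two of its variables). -/
theorem slupecki {A : Type u} [Fintype A] (hA : 2 < Fintype.card A)
    (F : Set (Ops A)) (hF : ∀ u : A → A, (⟨0, fun x : Fin 1 → A => u (x 0)⟩ : Ops A) ∈ F) :
    cloneGen F = Set.univ ↔
      ∃ f ∈ F, Function.Surjective f.2 ∧
        ∃ i j : Fin (f.1 + 1), i ≠ j ∧ DependsOnVar f.2 i ∧ DependsOnVar f.2 j := by
  constructor
  · intro hgen
    by_contra hno
    have hsub : F ⊆ SluAux.Slu A := by
      intro f hf hcon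
      exact hno ⟨f, hf, hcon.1, hcon.2⟩
    have hsubgen := SluAux.cloneGen_subset SluAux.isClone_slu hsub
    rw [hgen] at hsubgen
    obtain ⟨f2, hsurj2, hess2⟩ := SluAux.exists_good (A := A) (by omega)
    have hmem : (⟨1, f2⟩ : Ops A) ∈ SluAux.Slu A := hsubgen (Set.mem_univ _)
    exact hmem ⟨hsurj2, hess2⟩
  · rintro ⟨f0, hf0F, hf0s, i, j, hij, hdi, hdj⟩
    apply Set.eq_univ_of_forall
    intro op
    have hkey := SluAux.key hA (cloneGen F) (SluAux.isClone_cloneGen F)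
      (fun u => SluAux.subset_cloneGen F (hF u))
      (show (⟨f0.1, f0.2⟩ : Ops A) ∈ cloneGen F from SluAux.subset_cloneGen F hf0F)
      hf0s hij hdi hdj op.1 op.2
    exact hkey
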